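/- Consider a normalized three-qutrit coefficient tensor c whose reduced density matrices are all diagonal, with diagonal entries λ_i^{(1)} = Σ_{j,k} |c i j k|², λ_j^{(2)} = Σ_{i,k} |c i j k|², λ_k^{(3)} = Σ_{i,j} |c i j k|², assumed increasing: λ_1^{(a)} ≤ λ_2^{(a)} ≤ λ_3^{(a)} for a = 1,2,3. If c₁₃₃ = c₁₃₂ = 0, then P₅ := 2λ_2^{(2)} + λ_1^{(2)} + 2λ_1^{(3)} + λ_2^{(3)} − 2λ_1^{(1)} − λ_2^{(1)} ≥ 0. -/

import Mathlib

open scoped BigOperators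

/-- Diagonal entry of the first reduced density matrix. -/
noncomputable def lam1 (c : Fin 3 → Fin 3 → Fin 3 → ℂ) (i : Fin 3) : ℝ :=
  ∑ j : Fin 3, ∑ k : Fin 3, ‖c i j k‖ ^ 2

/-- Diagonal entry of the second reduced density matrix. -/
noncomputable def lam2 (c : Fin 3 → Fin 3 → Fin 3 → ℂ) (j : Fin 3) : ℝ :=
  ∑ i : Fin 3, ∑ k : Fin 3, ‖c i j k‖ ^ 2

/-- Diagonal entry of the third reduced density matrix. -/
noncomputable def lam3 (c : Fin 3 → Fin 3 → Fin 3 → ℂ) (k : Fin 3) : ℝ :=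
  ∑ i : Fin 3, ∑ j : Fin 3, ‖c i j k‖ ^ 2

open scoped BigOperators
open Complex Finset

/-- Bessel-type inequality: if x ⊥ y (in the ℂ-inner-product sense), then for any index t0,
    Y * |x t0|² + X * |y t0|² ≤ X * Y where X = ‖x‖², Y = ‖y‖². -/
lemma cs_key' {ι : Type*} (s : Finset ι) (x y : ι → ℂ)
    (h : ∑ t ∈ s, x t * (starRingEnd ℂ) (y t) = 0) {t0 : ι} (ht0 : t0 ∈ s) :
    (∑ t ∈ s, Complex.normSq (y t)) * Complex.normSq (x t0)
      + (∑ t ∈ s, Complex.normSq (x t)) * Complex.normSq (y t0)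
      ≤ (∑ t ∈ s, Complex.normSq (x t)) * (∑ t ∈ s, Complex.normSq (y t)) := by
  set X := ∑ t ∈ s, Complex.normSq (x t) with hXdef
  set Y := ∑ t ∈ s, Complex.normSq (y t) with hYdef
  have hX0 : 0 ≤ X := Finset.sum_nonneg fun _ _ => Complex.normSq_nonneg _
  have hY0 : 0 ≤ Y := Finset.sum_nonneg fun _ _ => Complex.normSq_nonneg _
  set p := Complex.normSq (x t0) with hpdef
  set q := Complex.normSq (y t0) with hqdef
  set v : ι → ℂ := fun t =>
    (Y : ℂ) * (starRingEnd ℂ) (x t0) * x t + (X : ℂ) * (starRingEnd ℂ) (y t0) * y t with hv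
  have hxX : ∑ t ∈ s, x t * (starRingEnd ℂ) (x t) = (X : ℂ) := by
    rw [hXdef]; push_cast
    exact Finset.sum_congr rfl fun t _ => Complex.mul_conj _
  have hyY : ∑ t ∈ s, y t * (starRingEnd ℂ) (y t) = (Y : ℂ) := by
    rw [hYdef]; push_cast
    exact Finset.sum_congr rfl fun t _ => Complex.mul_conj _
  have hconj : ∑ t ∈ s, (starRingEnd ℂ) (x t) * y t = 0 := by
    have := congrArg (starRingEnd ℂ) h
    rw [map_sum] at this
    simpa [mul_comm] using this
  have hp : (p : ℂ) = (starRingEnd ℂ) (x t0) * x t0 := by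
    rw [hpdef, ← Complex.mul_conj, mul_comm]
  have hq : (q : ℂ) = (starRingEnd ℂ) (y t0) * y t0 := by
    rw [hqdef, ← Complex.mul_conj, mul_comm]
  have expand : ∀ t ∈ s, v t * (starRingEnd ℂ) (v t) =
      (Y : ℂ)^2 * (p:ℂ) * (x t * (starRingEnd ℂ) (x t))
      + (X : ℂ)^2 * (q:ℂ) * (y t * (starRingEnd ℂ) (y t))
      + (X*Y : ℂ) * ((starRingEnd ℂ) (x t0) * y t0) * ((starRingEnd ℂ) (y t) * x t)
      + (X*Y : ℂ) * (x t0 * (starRingEnd ℂ) (y t0)) * ((starRingEnd ℂ) (x t) * y t) := by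
    intro t _
    simp only [hv, map_add, map_mul, Complex.conj_ofReal, Complex.conj_conj]
    rw [hp, hq]; ring
  have hvsum : ∑ t ∈ s, Complex.normSq (v t) = X*Y*(Y*p + X*q) := by
    have hcast : ((∑ t ∈ s, Complex.normSq (v t) : ℝ) : ℂ)
        = ∑ t ∈ s, v t * (starRingEnd ℂ) (v t) := by
      push_cast
      exact (Finset.sum_congr rfl fun t _ => (Complex.mul_conj _).symm)
    have : ∑ t ∈ s, v t * (starRingEnd ℂ) (v t) = ((X*Y*(Y*p + X*q) : ℝ) : ℂ) := by
      rw [Finset.sum_congr rfl expand]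
      rw [Finset.sum_add_distrib, Finset.sum_add_distrib, Finset.sum_add_distrib,
        ← Finset.mul_sum, ← Finset.mul_sum, ← Finset.mul_sum, ← Finset.mul_sum]
      have h2 : ∑ t ∈ s, (starRingEnd ℂ) (y t) * x t = 0 := by
        simpa [mul_comm] using h
      rw [hxX, hyY, h2, hconj]
      push_cast; ring
    exact_mod_cast hcast.trans this
  have hv0 : Complex.normSq (v t0) = (Y*p + X*q)^2 := by
    have : v t0 = ((Y*p + X*q : ℝ) : ℂ) := by
      simp only [hv]
      rw [mul_assoc, mul_assoc, ← hp, ← hq]; push_cast; ring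
    rw [this, Complex.normSq_ofReal]; ring
  have hsingle : Complex.normSq (v t0) ≤ ∑ t ∈ s, Complex.normSq (v t) :=
    Finset.single_le_sum (fun t _ => Complex.normSq_nonneg _) ht0
  rw [hv0, hvsum] at hsingle
  -- from S² ≤ XY·S with S ≥ 0 conclude S ≤ XY
  have hp0 : 0 ≤ p := hpdef ▸ Complex.normSq_nonneg _
  have hq0 : 0 ≤ q := hqdef ▸ Complex.normSq_nonneg _
  have hS0 : 0 ≤ Y*p + X*q := add_nonneg (mul_nonneg hY0 hp0) (mul_nonneg hX0 hq0)
  rcases hS0.eq_or_lt with h0 | hS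
  · rw [← h0]; exact mul_nonneg hX0 hY0
  · nlinarith [hsingle, hS]

section helpers
variable {X Y p q : ℝ}

lemma conclude (hp : 0 ≤ p) (hq : 0 ≤ q) (hpX : p ≤ X) (hqY : q ≤ Y) (hXY : X ≤ Y)
    (hkey : Y*p + X*q ≤ X*Y) : p + q ≤ Y := by
  have hX0 : 0 ≤ X := hp.trans hpX
  rcases hX0.eq_or_lt with h0 | hX
  · have hp0 : p = 0 := le_antisymm (h0 ▸ hpX) hp
    linarith
  · nlinarith [mul_nonneg (sub_nonneg.2 hXY) hp]
end helpers

lemma sumsq_prod (f : Fin 3 → Fin 3 → ℂ) :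
    ∑ t : Fin 3 × Fin 3, Complex.normSq (f t.1 t.2)
      = ∑ a : Fin 3, ∑ b : Fin 3, ‖f a b‖ ^ 2 := by
  rw [← Finset.univ_product_univ, Finset.sum_product]
  simp [Complex.sq_norm]

lemma orth_prod (f g : Fin 3 → Fin 3 → ℂ)
    (h : ∑ a : Fin 3, ∑ b : Fin 3, f a b * (starRingEnd ℂ) (g a b) = 0) :
    ∑ t : Fin 3 × Fin 3, f t.1 t.2 * (starRingEnd ℂ) (g t.1 t.2) = 0 := by
  rw [← Finset.univ_product_univ, Finset.sum_product]; exact h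

lemma normsq_norm (z : ℂ) : Complex.normSq z = ‖z‖ ^ 2 := by
  rw [Complex.sq_norm]

/-- Application: given orthogonality and sorted norms, two entries at a common index. -/
lemma pair_bound (f g : Fin 3 → Fin 3 → ℂ) (a : Fin 3) (b : Fin 3)
    (h : ∑ t : Fin 3 × Fin 3, f t.1 t.2 * (starRingEnd ℂ) (g t.1 t.2) = 0)
    (hXY : ∑ s : Fin 3, ∑ t : Fin 3, ‖f s t‖ ^ 2 ≤ ∑ s : Fin 3, ∑ t : Fin 3, ‖g s t‖ ^ 2) :
    ‖f a b‖ ^ 2 + ‖g a b‖ ^ 2 ≤ ∑ s : Fin 3, ∑ t : Fin 3, ‖g s t‖ ^ 2 := by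
  have key := cs_key' Finset.univ (fun t : Fin 3 × Fin 3 => f t.1 t.2)
    (fun t => g t.1 t.2) h (Finset.mem_univ (a, b))
  rw [sumsq_prod, sumsq_prod] at key
  simp only [normsq_norm] at key
  have hpX : ‖f a b‖ ^ 2 ≤ ∑ s : Fin 3, ∑ t : Fin 3, ‖f s t‖ ^ 2 := by
    have h1 : ‖f a b‖ ^ 2 ≤ ∑ t : Fin 3, ‖f a t‖ ^ 2 :=
      Finset.single_le_sum (f := fun t => ‖f a t‖ ^ 2) (fun _ _ => sq_nonneg _)
        (Finset.mem_univ b)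
    exact h1.trans (Finset.single_le_sum (f := fun s => ∑ t : Fin 3, ‖f s t‖ ^ 2)
      (fun _ _ => Finset.sum_nonneg fun _ _ => sq_nonneg _) (Finset.mem_univ a))
  have hqY : ‖g a b‖ ^ 2 ≤ ∑ s : Fin 3, ∑ t : Fin 3, ‖g s t‖ ^ 2 := by
    have h1 : ‖g a b‖ ^ 2 ≤ ∑ t : Fin 3, ‖g a t‖ ^ 2 :=
      Finset.single_le_sum (f := fun t => ‖g a t‖ ^ 2) (fun _ _ => sq_nonneg _)
        (Finset.mem_univ b)
    exact h1.trans (Finset.single_le_sum (f := fun s => ∑ t : Fin 3, ‖g s t‖ ^ 2)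
      (fun _ _ => Finset.sum_nonneg fun _ _ => sq_nonneg _) (Finset.mem_univ a))
  exact conclude (sq_nonneg _) (sq_nonneg _) hpX hqY hXY (by linarith [key])

theorem diag_basis_P5_nonneg (c : Fin 3 → Fin 3 → Fin 3 → ℂ)
    (hnorm : ∑ i : Fin 3, ∑ j : Fin 3, ∑ k : Fin 3, ‖c i j k‖ ^ 2 = 1)
    (horth1 : ∀ i i' : Fin 3, i ≠ i' →
      ∑ j : Fin 3, ∑ k : Fin 3, c i j k * (starRingEnd ℂ) (c i' j k) = 0)
    (horth2 : ∀ j j' : Fin 3, j ≠ j' →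
      ∑ i : Fin 3, ∑ k : Fin 3, c i j k * (starRingEnd ℂ) (c i j' k) = 0)
    (horth3 : ∀ k k' : Fin 3, k ≠ k' →
      ∑ i : Fin 3, ∑ j : Fin 3, c i j k * (starRingEnd ℂ) (c i j k') = 0)
    (hmono1 : lam1 c 0 ≤ lam1 c 1 ∧ lam1 c 1 ≤ lam1 c 2)
    (hmono2 : lam2 c 0 ≤ lam2 c 1 ∧ lam2 c 1 ≤ lam2 c 2)
    (hmono3 : lam3 c 0 ≤ lam3 c 1 ∧ lam3 c 1 ≤ lam3 c 2)
    (hc133 : c 0 2 2 = 0) (hc132 : c 0 2 1 = 0) :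
    0 ≤ 2 * lam2 c 1 + lam2 c 0 + 2 * lam3 c 0 + lam3 c 1
        - 2 * lam1 c 0 - lam1 c 1 := by
  have hA : ‖c 1 2 2‖ ^ 2 + ‖c 2 2 2‖ ^ 2 ≤ ∑ s : Fin 3, ∑ t : Fin 3, ‖c 2 s t‖ ^ 2 :=
    pair_bound (fun j k => c 1 j k) (fun j k => c 2 j k) 2 2
      (orth_prod _ _ (horth1 1 2 (by decide))) hmono1.2
  have hB : ‖c 0 0 2‖ ^ 2 + ‖c 0 1 2‖ ^ 2 ≤ ∑ s : Fin 3, ∑ t : Fin 3, ‖c s 1 t‖ ^ 2 :=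
    pair_bound (fun i k => c i 0 k) (fun i k => c i 1 k) 0 2
      (orth_prod _ _ (horth2 0 1 (by decide))) hmono2.1
  have hz1 : ‖c 0 2 2‖ ^ 2 = 0 := by rw [hc133]; simp
  have hz2 : ‖c 0 2 1‖ ^ 2 = 0 := by rw [hc132]; simp
  simp only [lam1, lam2, lam3, Fin.sum_univ_three] at hA hB ⊢
  linarith [hA, hB, hz1, hz2,
    sq_nonneg ‖c 0 0 0‖, sq_nonneg ‖c 0 0 1‖, sq_nonneg ‖c 0 0 2‖,
    sq_nonneg ‖c 0 1 0‖, sq_nonneg ‖c 0 1 1‖, sq_nonneg ‖c 0 1 2‖,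
    sq_nonneg ‖c 0 2 0‖, sq_nonneg ‖c 0 2 1‖, sq_nonneg ‖c 0 2 2‖,
    sq_nonneg ‖c 1 0 0‖, sq_nonneg ‖c 1 0 1‖, sq_nonneg ‖c 1 0 2‖,
    sq_nonneg ‖c 1 1 0‖, sq_nonneg ‖c 1 1 1‖, sq_nonneg ‖c 1 1 2‖,
    sq_nonneg ‖c 1 2 0‖, sq_nonneg ‖c 1 2 1‖, sq_nonneg ‖c 1 2 2‖,
    sq_nonneg ‖c 2 0 0‖, sq_nonneg ‖c 2 0 1‖, sq_nonneg ‖c 2 0 2‖,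
    sq_nonneg ‖c 2 1 0‖, sq_nonneg ‖c 2 1 1‖, sq_nonneg ‖c 2 1 2‖,
    sq_nonneg ‖c 2 2 0‖, sq_nonneg ‖c 2 2 1‖, sq_nonneg ‖c 2 2 2‖]
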